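/- arXiv:2407.09699 — 2 statements merged into one kernel-verified Lean document; each statement's English description precedes it below -/
import Mathlib

section
/- Let V be a finite-dimensional real vector space with a Lorentzian symmetric bilinear form g and v ∈ V with g(v,v) = -1. If f < 1, then the bilinear form g̃(x,y) = g(x,y) + f·g(v,x)·g(v,y) is nondegenerate of Lorentzian signature (-,+,...,+). -/
/-- A bilinear form (given as a plain function) is Lorentzian if it has a basis
in which its Gram matrix is `diag(-1, 1, ..., 1)`. -/
def IsLorentzianForm {V : Type*} [AddCommGroup V] [Module ℝ V] (g : V → V → ℝ) : Prop :=
  ∃ (n : ℕ) (b : Module.Basis (Fin n) ℝ V), ∀ i j, g (b i) (b j) =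
    if i = j then (if (i : ℕ) = 0 then -1 else 1) else 0

theorem stmt1 {V : Type*} [AddCommGroup V] [Module ℝ V] [FiniteDimensional ℝ V]
    (hdim : 2 ≤ Module.finrank ℝ V)
    (g : LinearMap.BilinForm ℝ V) (hsymm : ∀ x y, g x y = g y x)
    (hL : IsLorentzianForm (fun x y => g x y))
    (v : V) (hv : g v v = -1) (f : ℝ) (hf : f < 1)
    (gt : V → V → ℝ) (hgt : ∀ x y, gt x y = g x y + f * g v x * g v y) :
    (∀ x : V, (∀ y : V, gt x y = 0) → x = 0) ∧ IsLorentzianForm gt := by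
  obtain ⟨n, b, hb⟩ := hL
  simp only at hb
  set r := Real.sqrt (1 - f) with hr
  have hr2 : r * r = 1 - f := Real.mul_self_sqrt (by linarith)
  have hrpos : 0 < r := Real.sqrt_pos.mpr (by linarith)
  set s : ℝ := 1 - r with hs
  have hkey : 2 * s - s * s = f := by nlinarith
  have hs1 : s - 1 ≠ 0 := by simp [hs]; intro h; nlinarith
  set t : ℝ := s / (s - 1) with ht
  have hts : t + s - s * t = 0 := by
    have h1 : t * (s - 1) = s := by rw [ht]; exact div_mul_cancel₀ s hs1
    linear_combination -h1
  -- the maps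
  set S : V →ₗ[ℝ] V := LinearMap.id + s • (g v).smulRight v with hS
  set S' : V →ₗ[ℝ] V := LinearMap.id + t • (g v).smulRight v with hS'
  have happ : ∀ (c : ℝ) (x : V),
      (LinearMap.id + c • (g v).smulRight v : V →ₗ[ℝ] V) x = x + (c * g v x) • v := by
    intro c x
    simp [LinearMap.smulRight_apply, smul_smul]
  have hcomp : ∀ (c c' : ℝ), c + c' - c * c' = 0 → ∀ x : V,
      (LinearMap.id + c • (g v).smulRight v : V →ₗ[ℝ] V)
        ((LinearMap.id + c' • (g v).smulRight v : V →ₗ[ℝ] V) x) = x := by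
    intro c c' h x
    rw [happ, happ, map_add, map_smul, hv]
    simp only [smul_eq_mul]
    rw [add_assoc, ← add_smul,
      show c' * g v x + c * (g v x + c' * g v x * (-1)) = 0 from by linear_combination g v x * h,
      zero_smul, add_zero]
  have hts' : s + t - t * s = 0 := by linarith [hts, mul_comm s t]
  set E : V ≃ₗ[ℝ] V := LinearEquiv.ofLinear S S'
    (LinearMap.ext (hcomp s t (by linarith [hts])))
    (LinearMap.ext (hcomp t s (by nlinarith [hts]))) with hE
  have hEapp : ∀ x : V, E x = x + (s * g v x) • v := fun x => happ s x
  -- key identity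
  have hgE : ∀ x y : V, gt x y = g (E x) (E y) := by
    intro x y
    rw [hEapp, hEapp, hgt]
    simp only [map_add, map_smul, LinearMap.add_apply, LinearMap.smul_apply, smul_eq_mul, hv]
    rw [hsymm x v]
    linear_combination (g v x) * (g v y) * hr2
  -- nondegeneracy of g via the basis
  have hgnd : ∀ w : V, (∀ j, g w (b j) = 0) → w = 0 := by
    intro w hw
    have hcoord : ∀ j, b.repr w j = 0 := by
      intro j
      have hsum := b.sum_repr w
      have := congrArg (fun u => g u (b j)) hsum
      simp only [map_sum, map_smul, LinearMap.sum_apply, LinearMap.smul_apply,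
        smul_eq_mul] at this
      rw [hw j] at this
      rw [Finset.sum_congr rfl (fun i _ => by rw [hb i j])] at this
      rw [Finset.sum_eq_single j (fun i _ hij => by simp [hij]) (by simp)] at this
      simp only [if_pos rfl] at this
      by_cases h0 : (j : ℕ) = 0 <;> simp [h0] at this <;> linarith
    have : b.repr w = 0 := Finsupp.ext hcoord
    simpa using congrArg b.repr.symm this
  constructor
  · intro x hx
    have hEx : ∀ z : V, g (E x) z = 0 := by
      intro z
      have := hx (E.symm z)
      rw [hgE] at this
      simpa using this
    have : E x = 0 := hgnd (E x) (fun j => hEx (b j))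
    simpa using congrArg E.symm this
  · refine ⟨n, b.map E.symm, fun i j => ?_⟩
    simp only [Module.Basis.map_apply, hgE, LinearEquiv.apply_symm_apply]
    exact hb i j
end

section
/- Let g and ḡ be Lorentzian symmetric bilinear forms on a finite-dimensional real vector space V, let v ∈ V with g(v,v) = ḡ(v,v) = -1, and let f, f̄ ∈ ℝ. If g + f·g(v,·)⊗g(v,·) = ḡ + f̄·ḡ(v,·)⊗ḡ(v,·) and this common form g̃ satisfies g̃(v,v) < 0 (equivalently f, f̄ < 1), and moreover g̃(v,w) determines g(v,w) and ḡ(v,w) via the factor (1-f), then g = ḡ and f = f̄. In other words, for fixed v, the pair (g,f) with g(v,v) = -1 and f < 1 is uniquely determined by g̃. -/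
theorem stmt9 {V : Type*} [AddCommGroup V] [Module ℝ V] [FiniteDimensional ℝ V]
    (hdim : 2 ≤ Module.finrank ℝ V)
    (g gbar : LinearMap.BilinForm ℝ V)
    (hsymm : ∀ x y, g x y = g y x) (hsymm' : ∀ x y, gbar x y = gbar y x)
    (hL : IsLorentzianForm (fun x y => g x y))
    (hL' : IsLorentzianForm (fun x y => gbar x y))
    (v : V) (hv : g v v = -1) (hv' : gbar v v = -1)
    (f fbar : ℝ) (hf : f < 1) (hfbar : fbar < 1)
    (heq : ∀ x y : V,
      g x y + f * g v x * g v y = gbar x y + fbar * gbar v x * gbar v y) :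
    (∀ x y : V, g x y = gbar x y) ∧ f = fbar := by
  have hff : f = fbar := by
    have h := heq v v
    rw [hv, hv'] at h
    linarith
  have h1f : (1 : ℝ) - f ≠ 0 := by linarith
  have hgv : ∀ x : V, g v x = gbar v x := by
    intro x
    have h := heq x v
    rw [hsymm x v, hsymm' x v, hv, hv'] at h
    have h2 : (1 - f) * (g v x - gbar v x) = 0 := by
      linear_combination h + gbar v x * hff
    rcases mul_eq_zero.mp h2 with h3 | h3
    · exact absurd h3 h1f
    · linarith
  constructor
  · intro x y
    have h := heq x y
    rw [hgv x, hgv y, ← hff] at h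
    linarith
  · exact hff
end
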